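/- In an e-ring, for projections p,q: q−p ∈ E iff p ≤ q iff q−p ∈ P; and when p ≤ q, q−p is the infimum in E of q and 1−p. -/
import Mathlib


/-- An e-ring: an associative unital ring `R` together with a set `E` of effects.
`E⁺` is the additive submonoid generated by `E` (the set of finite sums of effects). -/
structure ERing (R : Type*) [Ring R] where
  E : Set R
  zero_mem : (0:R) ∈ E
  one_mem : (1:R) ∈ E
  compl_mem : ∀ e ∈ E, 1 - e ∈ E
  ax_i : ∀ a ∈ AddSubmonoid.closure E, -a ∈ AddSubmonoid.closure E → a = 0
  ax_ii : ∀ a ∈ AddSubmonoid.closure E, 1 - a ∈ AddSubmonoid.closure E → a ∈ E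
  ax_iii : ∀ a ∈ AddSubmonoid.closure E, ∀ b ∈ AddSubmonoid.closure E,
    a * b = b * a → a * b ∈ AddSubmonoid.closure E
  ax_iv : ∀ a ∈ AddSubmonoid.closure E, ∀ b ∈ AddSubmonoid.closure E,
    a * b * a ∈ AddSubmonoid.closure E
  ax_v : ∀ a ∈ AddSubmonoid.closure E, ∀ b ∈ AddSubmonoid.closure E,
    a * b * a = 0 → a * b = 0 ∧ b * a = 0
  ax_vi : ∀ a ∈ AddSubmonoid.closure E, ∀ b ∈ AddSubmonoid.closure E,
    (a - b) * (a - b) ∈ AddSubmonoid.closure E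

namespace ERing

variable {R : Type*} [Ring R]

/-- The positive cone `E⁺`: all finite sums of effects. -/
def Ep (S : ERing R) : Set R := (AddSubmonoid.closure S.E : Set R)

/-- The directed group `G = E⁺ − E⁺` (as a subset of `R`). -/
def G (S : ERing R) : Set R := {x | ∃ a ∈ S.Ep, ∃ b ∈ S.Ep, x = a - b}

/-- The partial order with positive cone `E⁺`: `g ≤ h` iff `h − g ∈ E⁺`. -/
def le (S : ERing R) (g h : R) : Prop := h - g ∈ S.Ep

/-- The set of projections: idempotent elements of `G`. -/
def P (S : ERing R) : Set R := {p | p ∈ S.G ∧ p * p = p}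

end ERing

namespace ERing

variable {R : Type*} [Ring R] (S : ERing R)

lemma mem_Ep_of_mem_E {a : R} (h : a ∈ S.E) : a ∈ S.Ep :=
  AddSubmonoid.subset_closure h

lemma mem_closure_iff_Ep {a : R} : a ∈ AddSubmonoid.closure S.E ↔ a ∈ S.Ep := Iff.rfl

/-- Every projection is an effect. -/
lemma proj_mem_E {p : R} (hp : p ∈ S.P) : p ∈ S.E := by
  obtain ⟨⟨a, ha, b, hb, hab⟩, hpp⟩ := hp
  have hpEp : p ∈ S.Ep := by
    have h := S.ax_vi a ha b hb
    rw [← hab, hpp] at h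
    exact h
  have h1b : (1 : R) + b ∈ AddSubmonoid.closure S.E :=
    AddSubmonoid.add_mem _ (AddSubmonoid.subset_closure S.one_mem) hb
  have h1p : (1 : R) - p ∈ S.Ep := by
    have h := S.ax_vi (1 + b) h1b a ha
    have e1 : (1 : R) + b - a = 1 - p := by rw [hab]; abel
    have e2 : ((1 : R) - p) * (1 - p) = 1 - p := by
      rw [sub_mul, one_mul, mul_sub, mul_one, hpp]; abel
    rw [e1, e2] at h
    exact h
  exact S.ax_ii p hpEp h1p

lemma proj_mem_Ep {p : R} (hp : p ∈ S.P) : p ∈ S.Ep :=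
  S.mem_Ep_of_mem_E (S.proj_mem_E hp)

lemma compl_proj_mem_Ep {p : R} (hp : p ∈ S.P) : (1 : R) - p ∈ S.Ep :=
  S.mem_Ep_of_mem_E (S.compl_mem p (S.proj_mem_E hp))

/-- If `p` is a projection, `b ∈ E⁺`, and `p * (1 - b) * p ∈ E⁺`
    (equivalently `p b p ≤ p`... we use it as: `-(p*b*p) ∈ E⁺`), then `p*b = b*p = 0`. -/
lemma pbp_zero {p b : R} (_hpp : p * p = p) (hpEp : p ∈ S.Ep)
    (hb : b ∈ AddSubmonoid.closure S.E)
    (hneg : -(p * b * p) ∈ AddSubmonoid.closure S.E) :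
    p * b = 0 ∧ b * p = 0 := by
  have hmem : p * b * p ∈ AddSubmonoid.closure S.E := S.ax_iv p hpEp b hb
  have hz : p * b * p = 0 := S.ax_i _ hmem hneg
  exact S.ax_v p hpEp b hb hz

/-- If `p ≤ q` for projections `p, q`, then `p q = q p = p`. -/
lemma absorb {p q : R} (hp : p ∈ S.P) (hq : q ∈ S.P) (h : q - p ∈ S.Ep) :
    p * q = p ∧ q * p = p := by
  have hpp := hp.2
  have hpEp := S.proj_mem_Ep hp
  have h1q : (1 : R) - q ∈ S.Ep := S.compl_proj_mem_Ep hq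
  have key : p * (q - p) * p = -(p * (1 - q) * p) := by
    have e : p * (q - p) * p + p * (1 - q) * p = p * (1 - p) * p := by noncomm_ring
    have e2 : p * (1 - p) = 0 := by rw [mul_sub, mul_one, hpp, sub_self]
    have e3 : p * (1 - p) * p = 0 := by rw [e2, zero_mul]
    rw [e3] at e
    exact eq_neg_of_add_eq_zero_left e
  have hz : p * (1 - q) = 0 ∧ (1 - q) * p = 0 := by
    refine S.pbp_zero hpp hpEp h1q ?_
    have hmem : p * (q - p) * p ∈ AddSubmonoid.closure S.E := S.ax_iv p hpEp _ h
    rw [key] at hmem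
    exact hmem
  constructor
  · have h1 := hz.1
    rw [mul_sub, mul_one] at h1
    exact (sub_eq_zero.mp h1).symm
  · have h1 := hz.2
    rw [sub_mul, one_mul] at h1
    exact (sub_eq_zero.mp h1).symm

end ERing

theorem stmt13 {R : Type*} [Ring R] (S : ERing R) :
    ∀ p ∈ S.P, ∀ q ∈ S.P,
      ((q - p ∈ S.E ↔ S.le p q) ∧ (S.le p q ↔ q - p ∈ S.P)) ∧
      (S.le p q →
        q - p ∈ S.E ∧ S.le (q - p) q ∧ S.le (q - p) (1 - p) ∧
        ∀ e ∈ S.E, S.le e q → S.le e (1 - p) → S.le e (q - p)) := by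
  intro p hp q hq
  have hpp := hp.2
  have hqq := hq.2
  have hpEp := S.proj_mem_Ep hp
  have hqEp := S.proj_mem_Ep hq
  have h1p : (1 : R) - p ∈ S.Ep := S.compl_proj_mem_Ep hp
  have h1q : (1 : R) - q ∈ S.Ep := S.compl_proj_mem_Ep hq
  -- le p q → q - p ∈ E
  have hE_of_le : S.le p q → q - p ∈ S.E := by
    intro h
    refine S.ax_ii (q - p) h ?_
    have : (1 : R) - (q - p) = (1 - q) + p := by abel
    rw [this]
    exact AddSubmonoid.add_mem _ h1q hpEp
  -- le p q → q - p ∈ P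
  have hP_of_le : S.le p q → q - p ∈ S.P := by
    intro h
    obtain ⟨hpq, hqp⟩ := S.absorb hp hq h
    refine ⟨⟨q, hqEp, p, hpEp, rfl⟩, ?_⟩
    have : (q - p) * (q - p) = q * q - q * p - p * q + p * p := by noncomm_ring
    rw [this, hpp, hqq, hpq, hqp]; abel
  -- q - p ∈ P → le p q
  have hle_of_P : q - p ∈ S.P → S.le p q := by
    intro h
    have hmem := S.ax_vi q hqEp p hpEp
    rw [h.2] at hmem
    exact hmem
  refine ⟨⟨⟨fun h => S.mem_Ep_of_mem_E h, hE_of_le⟩, ⟨hP_of_le, hle_of_P⟩⟩, ?_⟩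
  intro h
  obtain ⟨hpq, hqp⟩ := S.absorb hp hq h
  refine ⟨hE_of_le h, ?_, ?_, ?_⟩
  · show q - (q - p) ∈ S.Ep
    have : q - (q - p) = p := by abel
    rw [this]; exact hpEp
  · show (1 - p) - (q - p) ∈ S.Ep
    have : (1 : R) - p - (q - p) = 1 - q := by abel
    rw [this]; exact h1q
  · intro e he heq hep
    have heEp : e ∈ S.Ep := S.mem_Ep_of_mem_E he
    -- p e p = 0, hence p e = e p = 0
    have hb : (1 : R) - p - e ∈ AddSubmonoid.closure S.E := by
      have : (1 : R) - p - e = (1 - p) - e := rfl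
      rw [this]; exact hep
    have hz : p * e = 0 ∧ e * p = 0 := by
      refine S.pbp_zero hpp hpEp heEp ?_
      have hmem : p * ((1 : R) - p - e) * p ∈ AddSubmonoid.closure S.E :=
        S.ax_iv p hpEp _ hb
      have step : p * ((1 : R) - p - e) = -(p * e) := by
        rw [mul_sub, mul_sub, mul_one, hpp, sub_self, zero_sub]
      rw [step, neg_mul] at hmem
      exact hmem
    obtain ⟨hpe, hep0⟩ := hz
    -- (1-p)(q-e)(1-p) = q - p - e
    have h1 : p * (q - e) = p := by rw [mul_sub, hpq, hpe, sub_zero]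
    have h2 : (q - e) * p = p := by rw [sub_mul, hqp, hep0, sub_zero]
    have hkey : ((1 : R) - p) * (q - e) * (1 - p) = q - p - e := by
      rw [sub_mul, one_mul, h1, sub_mul, mul_sub, mul_sub, mul_one, mul_one, h2, hpp]
      abel
    show (q - p) - e ∈ S.Ep
    have hmem : ((1 : R) - p) * (q - e) * (1 - p) ∈ AddSubmonoid.closure S.E :=
      S.ax_iv _ h1p (q - e) heq
    rw [hkey] at hmem
    exact hmem
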